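/- Let (l,u) be a reachable probability interval on a nonempty finite set X with credal set 𝒫_L. Then for every A ⊆ X, the minimum of P(A) over p ∈ 𝒫_L equals max(∑_{x∈A} l(x), 1 − ∑_{x∉A} u(x)), and the maximum of P(A) over p ∈ 𝒫_L equals min(∑_{x∈A} u(x), 1 − ∑_{x∉A} l(x)). -/
import Mathlib


open Finset
open scoped Classical

variable {X : Type*}

/-- A probability distribution on a finite set `X`. -/
def IsProbDist [Fintype X] (p : X → ℝ) : Prop :=
  (∀ x, 0 ≤ p x) ∧ ∑ x, p x = 1

/-- Maximum of `f` over the finite set `A`, with the maximum over the empty set taken to be 0. -/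
noncomputable def finMax {ι : Type*} (A : Finset ι) (f : ι → ℝ) : ℝ :=
  if h : A.Nonempty then A.sup' h f else 0

/-- A possibility distribution on a finite set `X`. -/
def IsPossDist [Fintype X] (π : X → ℝ) : Prop :=
  (∀ x, 0 ≤ π x ∧ π x ≤ 1) ∧ ∃ x, π x = 1

/-- Necessity measure of a possibility distribution: `N(A) = 1 - max_{x ∈ Aᶜ} π x`. -/
noncomputable def necessity [Fintype X] [DecidableEq X] (π : X → ℝ) (A : Finset X) : ℝ :=
  1 - finMax Aᶜ π

/-- The credal set induced by a possibility distribution. -/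
def credalPoss [Fintype X] [DecidableEq X] (π : X → ℝ) : Set (X → ℝ) :=
  {p | IsProbDist p ∧ ∀ A : Finset X, necessity π A ≤ ∑ x ∈ A, p x}


/-- The credal set induced by a probability interval `(l, u)`. -/
def credalPI [Fintype X] (l u : X → ℝ) : Set (X → ℝ) :=
  {p | IsProbDist p ∧ ∀ y, l y ≤ p y ∧ p y ≤ u y}

/-- A probability interval `(l, u)` is reachable. -/
def Reachable [Fintype X] [DecidableEq X] (l u : X → ℝ) : Prop :=
  (∑ y, l y ≤ 1 ∧ 1 ≤ ∑ y, u y) ∧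
    ∀ y : X, u y + ∑ z ∈ Finset.univ.erase y, l z ≤ 1 ∧
      1 ≤ l y + ∑ z ∈ Finset.univ.erase y, u z

lemma fill_lemma {ι : Type*} (S : Finset ι) (l u : ι → ℝ) (h : ∀ x ∈ S, l x ≤ u x)
    (t : ℝ) (h1 : ∑ x ∈ S, l x ≤ t) (h2 : t ≤ ∑ x ∈ S, u x) :
    ∃ q : ι → ℝ, (∀ x ∈ S, l x ≤ q x ∧ q x ≤ u x) ∧ ∑ x ∈ S, q x = t := by
  set D := ∑ x ∈ S, u x - ∑ x ∈ S, l x with hDdef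
  set lam := (t - ∑ x ∈ S, l x) / D with hlamdef
  have hD : 0 ≤ D := by simp only [hDdef]; linarith
  have hlam0 : 0 ≤ lam := div_nonneg (by linarith) hD
  have hlam1 : lam ≤ 1 := by
    rcases eq_or_lt_of_le hD with hD0 | hD0
    · have : t - ∑ x ∈ S, l x ≤ 0 := by simp only [hDdef] at hD0; linarith
      have := div_nonpos_of_nonpos_of_nonneg this hD
      linarith
    · rw [hlamdef, div_le_one hD0]; simp only [hDdef]; linarith
  refine ⟨fun x => l x + lam * (u x - l x), fun x hx => ?_, ?_⟩
  · have hul := h x hx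
    refine ⟨?_, ?_⟩
    · have : 0 ≤ lam * (u x - l x) := mul_nonneg hlam0 (by linarith)
      show l x ≤ l x + lam * (u x - l x)
      linarith
    · have : lam * (u x - l x) ≤ 1 * (u x - l x) :=
        mul_le_mul_of_nonneg_right hlam1 (by linarith)
      show l x + lam * (u x - l x) ≤ u x
      rw [one_mul] at this
      linarith
  · have hsum : ∑ x ∈ S, (l x + lam * (u x - l x)) = ∑ x ∈ S, l x + lam * D := by
      rw [Finset.sum_add_distrib, ← Finset.mul_sum, hDdef, Finset.sum_sub_distrib]
    rw [hsum]
    rcases eq_or_lt_of_le hD with hD0 | hD0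
    · have ht : t = ∑ x ∈ S, l x := by simp only [hDdef] at hD0; linarith
      rw [← hD0, mul_zero]; linarith
    · rw [hlamdef, div_mul_cancel₀ _ (ne_of_gt hD0)]; ring

lemma exists_mem_credal [Fintype X] [DecidableEq X]
    (l u : X → ℝ) (hlu : ∀ y, 0 ≤ l y ∧ l y ≤ u y ∧ u y ≤ 1)
    (B : Finset X) (t : ℝ)
    (h1 : ∑ y ∈ B, l y ≤ t) (h2 : t ≤ ∑ y ∈ B, u y)
    (h3 : ∑ y ∈ Bᶜ, l y ≤ 1 - t) (h4 : 1 - t ≤ ∑ y ∈ Bᶜ, u y) :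
    ∃ p ∈ credalPI l u, ∑ y ∈ B, p y = t := by
  obtain ⟨q1, hq1, hq1s⟩ := fill_lemma B l u (fun x _ => (hlu x).2.1) t h1 h2
  obtain ⟨q2, hq2, hq2s⟩ := fill_lemma Bᶜ l u (fun x _ => (hlu x).2.1) (1 - t) h3 h4
  set p : X → ℝ := fun x => if x ∈ B then q1 x else q2 x with hp
  have hbounds : ∀ y, l y ≤ p y ∧ p y ≤ u y := by
    intro y
    by_cases hy : y ∈ B
    · simp only [hp, if_pos hy]; exact hq1 y hy
    · simp only [hp, if_neg hy]; exact hq2 y (Finset.mem_compl.2 hy)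
  have hsB : ∑ y ∈ B, p y = t := by
    rw [← hq1s]; exact Finset.sum_congr rfl fun x hx => by simp [hp, if_pos hx]
  have hsBc : ∑ y ∈ Bᶜ, p y = 1 - t := by
    rw [← hq2s]
    exact Finset.sum_congr rfl fun x hx => by
      simp [hp, if_neg (Finset.mem_compl.1 hx)]
  refine ⟨p, ⟨⟨fun x => le_trans (hlu x).1 (hbounds x).1, ?_⟩, hbounds⟩, hsB⟩
  rw [← Finset.sum_add_sum_compl B p, hsB, hsBc]; ring

theorem statement14 [Fintype X] [Nonempty X] [DecidableEq X]
    (l u : X → ℝ) (hlu : ∀ y, 0 ≤ l y ∧ l y ≤ u y ∧ u y ≤ 1)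
    (hreach : Reachable l u) (B : Finset X) :
    IsLeast ((fun p : X → ℝ => ∑ y ∈ B, p y) '' credalPI l u)
      (max (∑ y ∈ B, l y) (1 - ∑ y ∈ Bᶜ, u y)) ∧
    IsGreatest ((fun p : X → ℝ => ∑ y ∈ B, p y) '' credalPI l u)
      (min (∑ y ∈ B, u y) (1 - ∑ y ∈ Bᶜ, l y)) := by
  constructor
  · constructor
    · obtain ⟨p, hp, hps⟩ := exists_mem_credal l u hlu B
        (max (∑ y ∈ B, l y) (1 - ∑ y ∈ Bᶜ, u y)) (le_max_left _ _)
        (max_le (Finset.sum_le_sum fun y _ => (hlu y).2.1)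
          (by have := hreach.1.2
              rw [← Finset.sum_add_sum_compl B u] at this; linarith))
        (by have h1 : ∑ y ∈ B, l y ≤ 1 - ∑ y ∈ Bᶜ, l y := by
              have := hreach.1.1
              rw [← Finset.sum_add_sum_compl B l] at this; linarith
            have h2 : 1 - ∑ y ∈ Bᶜ, u y ≤ 1 - ∑ y ∈ Bᶜ, l y := by
              have : ∑ y ∈ Bᶜ, l y ≤ ∑ y ∈ Bᶜ, u y :=
                Finset.sum_le_sum fun y _ => (hlu y).2.1
              linarith
            have := max_le h1 h2
            linarith)
        (by have := le_max_right (∑ y ∈ B, l y) (1 - ∑ y ∈ Bᶜ, u y); linarith)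
      exact ⟨p, hp, hps⟩
    · rintro v ⟨p, hp, rfl⟩
      apply max_le
      · exact Finset.sum_le_sum fun y _ => (hp.2 y).1
      · have h1 : ∑ y ∈ B, p y + ∑ y ∈ Bᶜ, p y = 1 := by
          rw [Finset.sum_add_sum_compl]; exact hp.1.2
        have h2 : ∑ y ∈ Bᶜ, p y ≤ ∑ y ∈ Bᶜ, u y :=
          Finset.sum_le_sum fun y _ => (hp.2 y).2
        linarith
  · constructor
    · obtain ⟨p, hp, hps⟩ := exists_mem_credal l u hlu B
        (min (∑ y ∈ B, u y) (1 - ∑ y ∈ Bᶜ, l y))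
        (le_min (Finset.sum_le_sum fun y _ => (hlu y).2.1)
          (by have := hreach.1.1
              rw [← Finset.sum_add_sum_compl B l] at this; linarith))
        (min_le_left _ _)
        (by have := min_le_right (∑ y ∈ B, u y) (1 - ∑ y ∈ Bᶜ, l y); linarith)
        (by have h1 : 1 - ∑ y ∈ Bᶜ, u y ≤ ∑ y ∈ B, u y := by
              have := hreach.1.2
              rw [← Finset.sum_add_sum_compl B u] at this; linarith
            have h2 : ∑ y ∈ Bᶜ, l y ≤ ∑ y ∈ Bᶜ, u y :=
              Finset.sum_le_sum fun y _ => (hlu y).2.1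
            have h3 : 1 - ∑ y ∈ Bᶜ, u y ≤ 1 - ∑ y ∈ Bᶜ, l y := by linarith
            have := le_min h1 h3
            linarith)
      exact ⟨p, hp, hps⟩
    · rintro v ⟨p, hp, rfl⟩
      apply le_min
      · exact Finset.sum_le_sum fun y _ => (hp.2 y).2
      · have h1 : ∑ y ∈ B, p y + ∑ y ∈ Bᶜ, p y = 1 := by
          rw [Finset.sum_add_sum_compl]; exact hp.1.2
        have h2 : ∑ y ∈ Bᶜ, l y ≤ ∑ y ∈ Bᶜ, p y :=
          Finset.sum_le_sum fun y _ => (hp.2 y).1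
        linarith
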